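/- Let α ∈ (1,2], β ∈ (0,1), and let F : [0,1] → ℝ be continuous with |F(s)| ≤ M for all s ∈ [0,1]. Then for all 0 ≤ t₁ ≤ t₂ ≤ 1, |(T₂F)(t₂) − (T₂F)(t₁)| ≤ M·( (t₂ − t₁) + (t₂^{2−α} − t₁^{2−α})·Γ(2−β)/(Γ(3−α)Γ(α−β+1)) ). In particular the family {T₂F : F continuous, |F| ≤ M} is equicontinuous on [0,1]. -/

import Mathlib

open Real MeasureTheory Set

/-- Equicontinuity estimate for the operator `T₂`:
`|(T₂F)(t₂) − (T₂F)(t₁)| ≤ M((t₂−t₁) + (t₂^{2−α} − t₁^{2−α})Γ(2−β)/(Γ(3−α)Γ(α−β+1)))`. -/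
theorem T2_equicontinuous (α β : ℝ) (hα : 1 < α ∧ α ≤ 2) (hβ : 0 < β ∧ β < 1)
    (F : ℝ → ℝ) (M : ℝ) (hF : ContinuousOn F (Set.Icc 0 1))
    (hFM : ∀ s ∈ Set.Icc (0 : ℝ) 1, |F s| ≤ M)
    (t₁ t₂ : ℝ) (h₀ : 0 ≤ t₁) (h₁₂ : t₁ ≤ t₂) (h₂ : t₂ ≤ 1) :
    |((∫ s in (0 : ℝ)..t₂, F s)
        - (Real.Gamma (2 - β) * t₂ ^ (2 - α) / (Real.Gamma (3 - α) * Real.Gamma (α - β)))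
            * (∫ s in (0 : ℝ)..1, (1 - s) ^ (α - β - 1) * F s))
      - ((∫ s in (0 : ℝ)..t₁, F s)
        - (Real.Gamma (2 - β) * t₁ ^ (2 - α) / (Real.Gamma (3 - α) * Real.Gamma (α - β)))
            * (∫ s in (0 : ℝ)..1, (1 - s) ^ (α - β - 1) * F s))|
    ≤ M * ((t₂ - t₁)
        + (t₂ ^ (2 - α) - t₁ ^ (2 - α)) * Real.Gamma (2 - β)
            / (Real.Gamma (3 - α) * Real.Gamma (α - β + 1))) := by
  obtain ⟨hα1, hα2⟩ := hα
  obtain ⟨hβ0, hβ1⟩ := hβ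
  have hab : 0 < α - β := by linarith
  have hG3 : 0 < Real.Gamma (3 - α) := Real.Gamma_pos_of_pos (by linarith)
  have hGb : 0 < Real.Gamma (2 - β) := Real.Gamma_pos_of_pos (by linarith)
  have hGab : 0 < Real.Gamma (α - β) := Real.Gamma_pos_of_pos hab
  have hM : 0 ≤ M := le_trans (abs_nonneg _) (hFM 0 (by norm_num))
  set I := ∫ s in (0:ℝ)..1, (1 - s) ^ (α - β - 1) * F s with hIdef
  -- integrability of the weight
  have hw : IntervalIntegrable (fun s : ℝ => (1 - s) ^ (α - β - 1)) volume 0 1 := by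
    have h := (intervalIntegral.intervalIntegrable_rpow' (a := 0) (b := 1) (r := α - β - 1)
      (by linarith)).comp_sub_left 1
    simpa using h.symm
  have hFsub : Set.uIcc (0:ℝ) 1 ⊆ Set.Icc 0 1 := by
    rw [Set.uIcc_of_le (by norm_num : (0:ℝ) ≤ 1)]
  have hwF : IntervalIntegrable (fun s : ℝ => (1 - s) ^ (α - β - 1) * F s) volume 0 1 :=
    hw.mul_continuousOn (hF.mono hFsub)
  -- value of weight integral
  have hwval : (∫ s in (0:ℝ)..1, (1 - s) ^ (α - β - 1)) = 1 / (α - β) := by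
    have h1 : (∫ s in (0:ℝ)..1, (1 - s) ^ (α - β - 1))
        = ∫ s in (0:ℝ)..1, s ^ (α - β - 1) := by
      have := intervalIntegral.integral_comp_sub_left (a := 0) (b := 1)
        (fun x : ℝ => x ^ (α - β - 1)) 1
      simpa using this
    rw [h1, integral_rpow (Or.inl (by linarith))]
    rw [sub_add_cancel]
    rw [Real.one_rpow, Real.zero_rpow (by positivity)]
    ring
  -- bound on I
  have hIbound : |I| ≤ M * (1 / (α - β)) := by
    have := intervalIntegral.norm_integral_le_abs_of_norm_le (μ := volume) (a := 0) (b := 1)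
      (f := fun s : ℝ => (1 - s) ^ (α - β - 1) * F s)
      (g := fun s : ℝ => (1 - s) ^ (α - β - 1) * M) ?_ (hw.mul_const M)
    · have heq : (∫ s in (0:ℝ)..1, (1 - s) ^ (α - β - 1) * M) = M * (1 / (α - β)) := by
        rw [intervalIntegral.integral_mul_const, hwval]; ring
      have hnn : (0:ℝ) ≤ M * (1 / (α - β)) := by positivity
      calc |I| ≤ |∫ s in (0:ℝ)..1, (1 - s) ^ (α - β - 1) * M| := by
              simpa [Real.norm_eq_abs] using this
        _ = M * (1 / (α - β)) := by rw [heq, abs_of_nonneg hnn]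
    · filter_upwards [MeasureTheory.ae_restrict_mem measurableSet_uIoc] with s hs
      rw [Set.uIoc_of_le (by norm_num : (0:ℝ) ≤ 1)] at hs
      have hs0 : (0:ℝ) ≤ 1 - s := by linarith [hs.2]
      rw [Real.norm_eq_abs, abs_mul, abs_of_nonneg (Real.rpow_nonneg hs0 _)]
      exact mul_le_mul_of_nonneg_left (hFM s ⟨le_of_lt hs.1, hs.2⟩)
        (Real.rpow_nonneg hs0 _)
  -- integrability of F on subintervals
  have hFi : ∀ a b : ℝ, 0 ≤ a → b ≤ 1 → a ≤ b → IntervalIntegrable F volume a b := by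
    intro a b ha hb hab'
    apply ContinuousOn.intervalIntegrable
    apply hF.mono
    rw [Set.uIcc_of_le hab']
    exact Set.Icc_subset_Icc ha hb
  -- first difference
  have hdiff : (∫ s in (0:ℝ)..t₂, F s) - ∫ s in (0:ℝ)..t₁, F s
      = ∫ s in t₁..t₂, F s :=
    intervalIntegral.integral_interval_sub_left (hFi 0 t₂ le_rfl h₂ (le_trans h₀ h₁₂))
      (hFi 0 t₁ le_rfl (le_trans h₁₂ h₂) h₀)
  have hdbound : |∫ s in t₁..t₂, F s| ≤ M * (t₂ - t₁) := by
    have := intervalIntegral.norm_integral_le_of_norm_le_const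
      (C := M) (a := t₁) (b := t₂) (f := F) ?_
    · simpa [Real.norm_eq_abs, abs_of_nonneg (sub_nonneg.mpr h₁₂), mul_comm] using this
    · intro s hs
      rw [Set.uIoc_of_le h₁₂] at hs
      exact hFM s ⟨le_trans h₀ (le_of_lt hs.1), le_trans hs.2 h₂⟩
  -- monotonicity of t ^ (2-α)
  have hmono : t₁ ^ (2 - α) ≤ t₂ ^ (2 - α) :=
    Real.rpow_le_rpow h₀ h₁₂ (by linarith)
  -- rewrite the expression
  set c := Real.Gamma (2 - β) / (Real.Gamma (3 - α) * Real.Gamma (α - β)) with hc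
  have hc0 : 0 ≤ c := by positivity
  have key : ((∫ s in (0 : ℝ)..t₂, F s)
        - (Real.Gamma (2 - β) * t₂ ^ (2 - α) / (Real.Gamma (3 - α) * Real.Gamma (α - β))) * I)
      - ((∫ s in (0 : ℝ)..t₁, F s)
        - (Real.Gamma (2 - β) * t₁ ^ (2 - α) / (Real.Gamma (3 - α) * Real.Gamma (α - β))) * I)
      = (∫ s in t₁..t₂, F s) - c * (t₂ ^ (2 - α) - t₁ ^ (2 - α)) * I := by
    rw [← hdiff, hc]; ring
  rw [key]
  have habs : |(∫ s in t₁..t₂, F s) - c * (t₂ ^ (2 - α) - t₁ ^ (2 - α)) * I|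
      ≤ M * (t₂ - t₁) + c * (t₂ ^ (2 - α) - t₁ ^ (2 - α)) * (M * (1 / (α - β))) := by
    calc |(∫ s in t₁..t₂, F s) - c * (t₂ ^ (2 - α) - t₁ ^ (2 - α)) * I|
        ≤ |∫ s in t₁..t₂, F s| + |c * (t₂ ^ (2 - α) - t₁ ^ (2 - α)) * I| :=
          abs_sub _ _
      _ ≤ M * (t₂ - t₁) + c * (t₂ ^ (2 - α) - t₁ ^ (2 - α)) * (M * (1 / (α - β))) := by
          refine add_le_add hdbound ?_
          rw [abs_mul, abs_of_nonneg (mul_nonneg hc0 (sub_nonneg.mpr hmono))]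
          exact mul_le_mul_of_nonneg_left hIbound
            (mul_nonneg hc0 (sub_nonneg.mpr hmono))
  refine le_trans habs (le_of_eq ?_)
  have hG1 : Real.Gamma (α - β + 1) = (α - β) * Real.Gamma (α - β) :=
    Real.Gamma_add_one (ne_of_gt hab)
  rw [hG1, hc]
  field_simp
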